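/- Let p ≠ 3 be a prime and let η_p : V(𝔽_p) → ℤ assign to a binary cubic form x over 𝔽_p the number of its roots in ℙ¹(𝔽_p). Then the finite Fourier transform of η_p on V(𝔽_p) ≅ 𝔽_p⁴ (with respect to the standard GL₂-invariant pairing [·,·]) satisfies: η̂_p(x) = 1 + p^{-1} if x = 0; η̂_p(x) = p^{-1} if x ≠ 0 and x has a triple root in ℙ¹(𝔽_p); and η̂_p(x) = 0 otherwise. -/

import Mathlib

/-- The space of binary cubic forms over `ℤ/pℤ`, via coefficient quadruples `(a, b, c, d)`
representing `a u³ + b u² v + c u v² + d v³`. -/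
abbrev VMod (p : ℕ) := ZMod p × ZMod p × ZMod p × ZMod p

/-- Evaluation of the binary cubic form `y` at `(u, v)`. -/
def evalCubic {p : ℕ} (y : VMod p) (u v : ZMod p) : ZMod p :=
  y.1 * u ^ 3 + y.2.1 * u ^ 2 * v + y.2.2.1 * u * v ^ 2 + y.2.2.2 * v ^ 3

/-- The standard `GL₂`-invariant pairing
`[x, y] = x₄y₁ - (1/3)x₃y₂ + (1/3)x₂y₃ - x₁y₄` on binary cubic forms over `ℤ/pℤ` (`p ≠ 3`). -/
def pairCubic {p : ℕ} (x y : VMod p) : ZMod p :=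
  x.2.2.2 * y.1 - (3 : ZMod p)⁻¹ * x.2.2.1 * y.2.1 + (3 : ZMod p)⁻¹ * x.2.1 * y.2.2.1
    - x.1 * y.2.2.2

/-- The additive character `k ↦ e(k/p)` on `ℤ/pℤ`. -/
noncomputable def eChar (p : ℕ) (k : ZMod p) : ℂ :=
  Complex.exp (2 * Real.pi * Complex.I * (k.val : ℂ) / (p : ℂ))

/-- `η_p(y)`: the number of roots of the binary cubic form `y` in `ℙ¹(𝔽_p)`. -/
noncomputable def etaP (p : ℕ) [Fact p.Prime] (y : VMod p) : ℕ :=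
  Nat.card {ℓ : Projectivization (ZMod p) (ZMod p × ZMod p) //
    evalCubic y ℓ.rep.1 ℓ.rep.2 = 0}

/-- The finite Fourier transform `η̂_p(x) = p⁻⁴ ∑_y η_p(y) e([x,y]/p)`. -/
noncomputable def etaHat (p : ℕ) [Fact p.Prime] (x : VMod p) : ℂ :=
  ((p : ℂ)) ⁻¹ ^ 4 * ∑ y : VMod p, (etaP p y : ℂ) * eChar p (pairCubic x y)

/-- `x` has a triple root in `ℙ¹(𝔽_p)`: `x = c (t u - s v)³` for some `(s : t) ∈ ℙ¹` and
`c ≠ 0`. -/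
def HasTripleRoot {p : ℕ} (x : VMod p) : Prop :=
  ∃ c s t : ZMod p, (s, t) ≠ (0, 0) ∧ c ≠ 0 ∧
    x = (c * t ^ 3, -(3 * c * t ^ 2 * s), 3 * c * t * s ^ 2, -(c * s ^ 3))



set_option linter.unusedSectionVars false
set_option maxHeartbeats 1000000

open Projectivization Finset

section EtaHatAux

variable {p : ℕ} [Fact p.Prime]

/-- `wv k s t` : the coefficient vector of `k (t u - s v)³`. -/
def wv (k s t : ZMod p) : VMod p :=
  (k * t ^ 3, -(3 * k * t ^ 2 * s), 3 * k * t * s ^ 2, -(k * s ^ 3))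

lemma pne : p ≠ 0 := (Fact.out : p.Prime).ne_zero
instance : NeZero p := ⟨pne⟩

lemma eChar_eq (k : ZMod p) :
    eChar p k = Complex.exp (2 * Real.pi * Complex.I / p) ^ k.val := by
  rw [← Complex.exp_nat_mul, eChar]
  congr 1
  ring

lemma eChar_zero : eChar p 0 = 1 := by
  simp [eChar, ZMod.val_zero]

lemma eChar_add (a b : ZMod p) : eChar p (a + b) = eChar p a * eChar p b := by
  have hz : Complex.exp (2 * Real.pi * Complex.I / p) ^ p = 1 :=
    (Complex.isPrimitiveRoot_exp p pne).pow_eq_one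
  rw [eChar_eq, eChar_eq, eChar_eq, ← pow_add, ZMod.val_add]
  conv_rhs => rw [← Nat.div_add_mod (a.val + b.val) p]
  rw [pow_add, pow_mul, hz, one_pow, one_mul]

lemma sum_eChar_mul (a : ZMod p) :
    ∑ z : ZMod p, eChar p (z * a) = if a = 0 then (p : ℂ) else 0 := by
  split_ifs with h
  · simp [h, eChar_zero, ZMod.card]
  · have h1 : ∑ z : ZMod p, eChar p (z * a) = ∑ z : ZMod p, eChar p z := by
      exact Fintype.sum_bijective (· * a) (mulRight_bijective₀ a h) _ _ (fun z => rfl)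
    rw [h1]
    have h2 : ∑ z : ZMod p, eChar p z
        = ∑ i ∈ Finset.range p, Complex.exp (2 * Real.pi * Complex.I / p) ^ i := by
      simp_rw [eChar_eq]
      obtain ⟨n, rfl⟩ := Nat.exists_eq_succ_of_ne_zero (pne : p ≠ 0)
      exact Fin.sum_univ_eq_sum_range _ _
    rw [h2]
    exact (Complex.isPrimitiveRoot_exp p pne).geom_sum_eq_zero (Fact.out : p.Prime).one_lt


lemma sum_split {α β : Type*} [Fintype α] [Fintype β] (f : α → ℂ) (g : β → ℂ) :
    ∑ x : α × β, f x.1 * g x.2 = (∑ a, f a) * (∑ b, g b) := by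
  rw [Fintype.sum_prod_type]
  simp_rw [← Finset.mul_sum]
  rw [← Finset.sum_mul]

lemma sum_eChar_quad (A B C D : ZMod p) :
    ∑ y : VMod p, eChar p (A * y.1 + B * y.2.1 + C * y.2.2.1 + D * y.2.2.2)
      = if A = 0 ∧ B = 0 ∧ C = 0 ∧ D = 0 then (p : ℂ) ^ 4 else 0 := by
  have step : ∑ y : VMod p, eChar p (A * y.1 + B * y.2.1 + C * y.2.2.1 + D * y.2.2.2)
      = (∑ a, eChar p (A * a)) * ((∑ b, eChar p (B * b)) *
          ((∑ c, eChar p (C * c)) * (∑ d, eChar p (D * d)))) := by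
    simp_rw [eChar_add, mul_assoc]
    rw [sum_split (fun a => eChar p (A * a))
      (fun z : ZMod p × ZMod p × ZMod p => eChar p (B * z.1) * (eChar p (C * z.2.1) * eChar p (D * z.2.2)))]
    congr 1
    rw [sum_split (fun b => eChar p (B * b))
      (fun z : ZMod p × ZMod p => eChar p (C * z.1) * eChar p (D * z.2))]
    congr 1
    exact sum_split (fun c => eChar p (C * c)) (fun d => eChar p (D * d))
  rw [step]
  have e : ∀ a : ZMod p, ∑ z : ZMod p, eChar p (a * z) = if a = 0 then (p:ℂ) else 0 := by
    intro a; simp_rw [mul_comm a]; exact sum_eChar_mul a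
  rw [e A, e B, e C, e D]
  by_cases hA : A = 0 <;> by_cases hB : B = 0 <;> by_cases hC : C = 0 <;> by_cases hD : D = 0 <;>
    simp [hA, hB, hC, hD] <;> ring


lemma prodPair_ne_zero_iff {v : ZMod p × ZMod p} : v ≠ 0 ↔ ¬(v.1 = 0 ∧ v.2 = 0) := by
  rw [Ne, Prod.ext_iff]; simp

lemma wv_zero (s t : ZMod p) : wv 0 s t = (0 : VMod p) := by
  simp [wv]

lemma wv_eq_zero_iff {k s t : ZMod p} (h : ¬(s = 0 ∧ t = 0)) :
    wv k s t = (0 : VMod p) ↔ k = 0 := by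
  constructor
  · intro he
    simp only [wv, Prod.ext_iff] at he
    obtain ⟨h1, h2, h3, h4⟩ := he
    by_contra hk
    simp only [Prod.fst_zero, Prod.snd_zero] at h1 h4
    have ht : t = 0 := by
      have := mul_eq_zero.1 h1
      rcases this with h | h
      · exact absurd h hk
      · exact pow_eq_zero_iff (n := 3) (by norm_num) |>.1 h
    have hs : s = 0 := by
      have h4' : k * s ^ 3 = 0 := by linear_combination -h4
      rcases mul_eq_zero.1 h4' with h | h
      · exact absurd h hk
      · exact pow_eq_zero_iff (n := 3) (by norm_num) |>.1 h
    exact h ⟨hs, ht⟩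
  · rintro rfl; exact wv_zero s t

lemma wv_inj_k {k k' s t : ZMod p} (h : ¬(s = 0 ∧ t = 0))
    (he : wv k s t = wv k' s t) : k = k' := by
  simp only [wv, Prod.ext_iff] at he
  obtain ⟨h1, h2, h3, h4⟩ := he
  by_cases ht : t = 0
  · have hs : s ≠ 0 := fun hs => h ⟨hs, ht⟩
    have : k * s ^ 3 = k' * s ^ 3 := by linear_combination -h4
    exact mul_right_cancel₀ (pow_ne_zero 3 hs) this
  · exact mul_right_cancel₀ (pow_ne_zero 3 ht) h1

lemma wv_scale (k a s t : ZMod p) : wv k (a * s) (a * t) = wv (k * a ^ 3) s t := by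
  simp only [wv, Prod.ext_iff]
  refine ⟨by ring, by ring, by ring, by ring⟩

lemma mk_eq_of_wv (h3 : (3 : ZMod p) ≠ 0) {k k' : ZMod p} (hk : k ≠ 0) (hk' : k' ≠ 0)
    {v w : ZMod p × ZMod p} (hv : v ≠ 0) (hw : w ≠ 0)
    (he : wv k v.1 v.2 = wv k' w.1 w.2) :
    Projectivization.mk (ZMod p) v hv = Projectivization.mk (ZMod p) w hw := by
  simp only [wv, Prod.ext_iff] at he
  obtain ⟨e1, e2, e3, e4⟩ := he
  have e2' : k * v.2 ^ 2 * v.1 = k' * w.2 ^ 2 * w.1 := by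
    have h5 : (3 : ZMod p) * (k * v.2 ^ 2 * v.1) = 3 * (k' * w.2 ^ 2 * w.1) := by
      linear_combination -e2
    exact mul_left_cancel₀ h3 h5
  have cross : v.1 * w.2 = v.2 * w.1 := by
    by_cases hv2 : v.2 = 0
    · have hw2 : w.2 = 0 := by
        have : k' * w.2 ^ 3 = 0 := by rw [← e1, hv2]; ring
        rcases mul_eq_zero.1 this with h | h
        · exact absurd h hk'
        · exact pow_eq_zero_iff (n := 3) (by norm_num) |>.1 h
      rw [hv2, hw2]; ring
    · have key : k * v.2 ^ 2 * (v.1 * w.2 - v.2 * w.1) = 0 := by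
        linear_combination w.2 * e2' - w.1 * e1
      have h6 : v.1 * w.2 - v.2 * w.1 = 0 := by
        rcases mul_eq_zero.1 key with h | h
        · rcases mul_eq_zero.1 h with h' | h'
          · exact absurd h' hk
          · exact absurd (pow_eq_zero_iff (n := 2) (by norm_num) |>.1 h') hv2
        · exact h
      linear_combination h6
  rw [Projectivization.mk_eq_mk_iff']
  rw [prodPair_ne_zero_iff] at hv hw
  by_cases hw2 : w.2 = 0
  · have hw1 : w.1 ≠ 0 := fun h => hw ⟨h, hw2⟩
    have hv2 : v.2 = 0 := by
      have h7 : v.2 * w.1 = 0 := by rw [← cross, hw2]; ring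
      rcases mul_eq_zero.1 h7 with h | h
      · exact h
      · exact absurd h hw1
    refine ⟨v.1 * w.1⁻¹, ?_⟩
    rw [Prod.ext_iff]
    constructor
    · show v.1 * w.1⁻¹ * w.1 = v.1
      field_simp
    · show v.1 * w.1⁻¹ * w.2 = v.2
      rw [hw2, hv2]; ring
  · refine ⟨v.2 * w.2⁻¹, ?_⟩
    rw [Prod.ext_iff]
    constructor
    · show v.2 * w.2⁻¹ * w.1 = v.1
      field_simp
      linear_combination -cross
    · show v.2 * w.2⁻¹ * w.2 = v.2
      field_simp

noncomputable instance : Fintype (Projectivization (ZMod p) (ZMod p × ZMod p)) :=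
  @Fintype.ofFinite _ (Quotient.finite _)

noncomputable def projEquiv : Projectivization (ZMod p) (ZMod p × ZMod p) ≃ Option (ZMod p) where
  toFun ℓ := if h : ℓ.rep.2 = 0 then none else some (ℓ.rep.1 * ℓ.rep.2⁻¹)
  invFun o := o.elim (Projectivization.mk _ ((1 : ZMod p), (0 : ZMod p)) (by
      rw [prodPair_ne_zero_iff]; simp)) (fun a => Projectivization.mk _ (a, (1 : ZMod p)) (by
      rw [prodPair_ne_zero_iff]; simp))
  left_inv ℓ := by
    by_cases h : ℓ.rep.2 = 0
    · show (if h : ℓ.rep.2 = 0 then none else some (ℓ.rep.1 * ℓ.rep.2⁻¹)).elim _ _ = ℓ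
      rw [dif_pos h]
      show Projectivization.mk (ZMod p) ((1 : ZMod p), (0 : ZMod p)) _ = ℓ
      conv_rhs => rw [← Projectivization.mk_rep ℓ]
      have hrep := ℓ.rep_nonzero
      have h1 : ℓ.rep.1 ≠ 0 := by
        rw [prodPair_ne_zero_iff] at hrep
        exact fun h' => hrep ⟨h', h⟩
      rw [Projectivization.mk_eq_mk_iff']
      refine ⟨ℓ.rep.1⁻¹, ?_⟩
      rw [Prod.ext_iff]
      constructor
      · show ℓ.rep.1⁻¹ * ℓ.rep.1 = 1
        field_simp
      · show ℓ.rep.1⁻¹ * ℓ.rep.2 = 0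
        rw [h]; ring
    · show (if h : ℓ.rep.2 = 0 then none else some (ℓ.rep.1 * ℓ.rep.2⁻¹)).elim _ _ = ℓ
      rw [dif_neg h]
      show Projectivization.mk (ZMod p) (ℓ.rep.1 * ℓ.rep.2⁻¹, (1 : ZMod p)) _ = ℓ
      conv_rhs => rw [← Projectivization.mk_rep ℓ]
      rw [Projectivization.mk_eq_mk_iff']
      refine ⟨ℓ.rep.2⁻¹, ?_⟩
      rw [Prod.ext_iff]
      constructor
      · show ℓ.rep.2⁻¹ * ℓ.rep.1 = ℓ.rep.1 * ℓ.rep.2⁻¹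
        ring
      · show ℓ.rep.2⁻¹ * ℓ.rep.2 = 1
        field_simp
  right_inv o := by
    cases o with
    | none =>
      simp only [Option.elim]
      obtain ⟨u, hu⟩ := Projectivization.exists_smul_eq_mk_rep (ZMod p)
        ((1 : ZMod p), (0 : ZMod p)) (by rw [prodPair_ne_zero_iff]; simp)
      have h2 : (Projectivization.mk (ZMod p) ((1 : ZMod p), (0 : ZMod p))
          (by rw [prodPair_ne_zero_iff]; simp)).rep.2 = 0 := by
        rw [← hu]
        show (u : ZMod p) * 0 = 0
        ring
      simp [h2]
    | some a =>
      simp only [Option.elim]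
      obtain ⟨u, hu⟩ := Projectivization.exists_smul_eq_mk_rep (ZMod p)
        (a, (1 : ZMod p)) (by rw [prodPair_ne_zero_iff]; simp)
      have h1 : (Projectivization.mk (ZMod p) (a, (1 : ZMod p))
          (by rw [prodPair_ne_zero_iff]; simp)).rep.1 = (u : ZMod p) * a := by
        rw [← hu]; rfl
      have h2 : (Projectivization.mk (ZMod p) (a, (1 : ZMod p))
          (by rw [prodPair_ne_zero_iff]; simp)).rep.2 = (u : ZMod p) := by
        rw [← hu]
        show (u : ZMod p) * 1 = (u : ZMod p)
        ring
      have hu0 : (u : ZMod p) ≠ 0 := u.ne_zero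
      split_ifs with hc
      · exact absurd (h2.symm.trans hc) hu0
      congr 1
      simp only [hc, ↓reduceDIte, Option.some.injEq]
      rw [h2]
      field_simp
      exact h1

lemma card_proj : Fintype.card (Projectivization (ZMod p) (ZMod p × ZMod p)) = p + 1 := by
  rw [Fintype.card_congr (projEquiv (p := p)), Fintype.card_option, ZMod.card]


lemma pair_eval (x y : VMod p) (k s t : ZMod p) :
    pairCubic x y + evalCubic y s t * k
      = (x.2.2.2 + k * s ^ 3) * y.1 + (-(3 : ZMod p)⁻¹ * x.2.2.1 + k * s ^ 2 * t) * y.2.1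
        + ((3 : ZMod p)⁻¹ * x.2.1 + k * s * t ^ 2) * y.2.2.1
        + (-x.1 + k * t ^ 3) * y.2.2.2 := by
  simp only [pairCubic, evalCubic]; ring

lemma cond_iff (h3 : (3 : ZMod p) ≠ 0) (x : VMod p) (k s t : ZMod p) :
    (x.2.2.2 + k * s ^ 3 = 0 ∧ -(3 : ZMod p)⁻¹ * x.2.2.1 + k * s ^ 2 * t = 0 ∧
      (3 : ZMod p)⁻¹ * x.2.1 + k * s * t ^ 2 = 0 ∧ -x.1 + k * t ^ 3 = 0)
      ↔ x = wv k s t := by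
  have h31 : (3 : ZMod p) * (3 : ZMod p)⁻¹ = 1 := mul_inv_cancel₀ h3
  obtain ⟨x1, x2, x3, x4⟩ := x
  simp only [wv, Prod.ext_iff]
  constructor
  · rintro ⟨h1, h2, h3', h4⟩
    refine ⟨by linear_combination -h4, ?_, ?_, by linear_combination h1⟩
    · linear_combination 3 * h3' - x2 * h31
    · linear_combination -3 * h2 - x3 * h31
  · rintro ⟨r1, r2, r3, r4⟩
    refine ⟨by rw [r4]; ring, ?_, ?_, by rw [r1]; ring⟩
    · rw [r3]; linear_combination (-(k * t * s ^ 2)) * h31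
    · rw [r2]; linear_combination (-(k * t ^ 2 * s)) * h31

lemma etaP_eq (y : VMod p) :
    (etaP p y : ℂ) = ∑ ℓ : Projectivization (ZMod p) (ZMod p × ZMod p),
      if evalCubic y ℓ.rep.1 ℓ.rep.2 = 0 then (1 : ℂ) else 0 := by
  rw [etaP, Nat.card_eq_fintype_card, Fintype.card_subtype, Finset.card_filter]
  push_cast
  rfl

lemma etaHat_eq (h3 : (3 : ZMod p) ≠ 0) (x : VMod p) :
    etaHat p x = (p : ℂ)⁻¹ * ∑ ℓ : Projectivization (ZMod p) (ZMod p × ZMod p),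
      ((Finset.univ.filter (fun k : ZMod p => x = wv k ℓ.rep.1 ℓ.rep.2)).card : ℂ) := by
  have hp0 : (p : ℂ) ≠ 0 := Nat.cast_ne_zero.2 (Fact.out : p.Prime).ne_zero
  have main : ∀ ℓ : Projectivization (ZMod p) (ZMod p × ZMod p),
      ∑ y : VMod p, (if evalCubic y ℓ.rep.1 ℓ.rep.2 = 0 then (1 : ℂ) else 0)
          * eChar p (pairCubic x y)
        = (p : ℂ) ^ 3 * ((Finset.univ.filter
            (fun k : ZMod p => x = wv k ℓ.rep.1 ℓ.rep.2)).card : ℂ) := by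
    intro ℓ
    set s := ℓ.rep.1
    set t := ℓ.rep.2
    apply mul_left_cancel₀ hp0
    have lhs1 : (p : ℂ) * ∑ y : VMod p,
        (if evalCubic y s t = 0 then (1 : ℂ) else 0) * eChar p (pairCubic x y)
        = ∑ y : VMod p, (∑ k : ZMod p, eChar p (k * evalCubic y s t)) * eChar p (pairCubic x y) := by
      rw [Finset.mul_sum]
      refine Finset.sum_congr rfl fun y _ => ?_
      rw [sum_eChar_mul (evalCubic y s t)]
      split_ifs <;> ring
    rw [lhs1]
    have lhs2 : ∑ y : VMod p, (∑ k : ZMod p, eChar p (k * evalCubic y s t)) * eChar p (pairCubic x y)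
        = ∑ k : ZMod p, ∑ y : VMod p, eChar p (pairCubic x y + evalCubic y s t * k) := by
      simp_rw [Finset.sum_mul]
      rw [Finset.sum_comm]
      refine Finset.sum_congr rfl fun k _ => Finset.sum_congr rfl fun y _ => ?_
      rw [eChar_add, mul_comm (eChar p _), mul_comm k]
    rw [lhs2]
    have lhs3 : ∀ k : ZMod p, ∑ y : VMod p, eChar p (pairCubic x y + evalCubic y s t * k)
        = if x = wv k s t then (p : ℂ) ^ 4 else 0 := by
      intro k
      simp_rw [pair_eval x _ k s t]
      rw [sum_eChar_quad]
      exact if_congr (cond_iff h3 x k s t) rfl rfl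
    simp_rw [lhs3]
    rw [Finset.sum_ite, Finset.sum_const, Finset.sum_const_zero, add_zero, nsmul_eq_mul]
    ring
  rw [etaHat]
  have h1 : ∑ y : VMod p, (etaP p y : ℂ) * eChar p (pairCubic x y)
      = ∑ ℓ : Projectivization (ZMod p) (ZMod p × ZMod p), ∑ y : VMod p,
          (if evalCubic y ℓ.rep.1 ℓ.rep.2 = 0 then (1 : ℂ) else 0) * eChar p (pairCubic x y) := by
    simp_rw [etaP_eq, Finset.sum_mul]
    exact Finset.sum_comm
  rw [h1, Finset.sum_congr rfl (fun ℓ _ => main ℓ), ← Finset.mul_sum]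
  field_simp


end EtaHatAux

section EtaHatAux2
variable {p : ℕ} [Fact p.Prime]

lemma zmodThreeNeZero (hp : p ≠ 3) : (3 : ZMod p) ≠ 0 := by
  intro h
  have h' : ((3 : ℕ) : ZMod p) = 0 := by push_cast; exact h
  rw [ZMod.natCast_eq_zero_iff] at h'
  rcases (Nat.prime_three).eq_one_or_self_of_dvd p h' with h1 | h1
  · exact (Fact.out : p.Prime).ne_one h1
  · exact hp h1

/-- Mori's evaluation of the Fourier transform of the root-counting function `η_p` on the
space of binary cubic forms over `𝔽_p`, for a prime `p ≠ 3`: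
`η̂_p(x) = 1 + 1/p` for `x = 0`, `η̂_p(x) = 1/p` if `x ≠ 0` has a triple root, and
`η̂_p(x) = 0` otherwise. -/
theorem etaHat_eval (p : ℕ) [Fact p.Prime] (hp : p ≠ 3) (x : VMod p) :
    (x = 0 → etaHat p x = 1 + (p : ℂ)⁻¹) ∧
    (x ≠ 0 → HasTripleRoot x → etaHat p x = (p : ℂ)⁻¹) ∧
    (x ≠ 0 → ¬ HasTripleRoot x → etaHat p x = 0) := by
  classical
  have h3 : (3 : ZMod p) ≠ 0 := zmodThreeNeZero hp
  have hp0 : (p : ℂ) ≠ 0 := Nat.cast_ne_zero.2 (Fact.out : p.Prime).ne_zero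
  refine ⟨?_, ?_, ?_⟩
  · rintro rfl
    rw [etaHat_eq h3]
    have hN : ∀ ℓ : Projectivization (ZMod p) (ZMod p × ZMod p),
        (Finset.univ.filter (fun k : ZMod p => (0 : VMod p) = wv k ℓ.rep.1 ℓ.rep.2)).card = 1 := by
      intro ℓ
      rw [Finset.card_eq_one]
      refine ⟨0, ?_⟩
      have hrep : ¬(ℓ.rep.1 = 0 ∧ ℓ.rep.2 = 0) := prodPair_ne_zero_iff.1 ℓ.rep_nonzero
      ext k
      simp only [Finset.mem_filter, Finset.mem_univ, true_and, Finset.mem_singleton]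
      constructor
      · intro hk; exact (wv_eq_zero_iff hrep).1 hk.symm
      · rintro rfl; exact (wv_zero _ _).symm
    simp_rw [hN]
    rw [Finset.sum_const, Finset.card_univ, card_proj]
    push_cast
    field_simp
    simp
  · rintro hx0 ⟨c, s, t, hst, hc, hx⟩
    have hst0 : ((s, t) : ZMod p × ZMod p) ≠ 0 :=
      prodPair_ne_zero_iff.2 (fun ⟨a, b⟩ => hst (Prod.ext_iff.2 ⟨a, b⟩))
    set ℓ₀ := Projectivization.mk (ZMod p) (s, t) hst0 with hℓ₀
    have hx' : x = wv c s t := hx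
    rw [etaHat_eq h3]
    have hN : ∀ ℓ : Projectivization (ZMod p) (ZMod p × ZMod p),
        (Finset.univ.filter (fun k : ZMod p => x = wv k ℓ.rep.1 ℓ.rep.2)).card
          = if ℓ = ℓ₀ then 1 else 0 := by
      intro ℓ
      split_ifs with hℓ
      · subst hℓ
        obtain ⟨u, hu⟩ := Projectivization.exists_smul_eq_mk_rep (ZMod p) (s, t) hst0
        have hrep1 : ℓ₀.rep.1 = (u : ZMod p) * s := by rw [hℓ₀, ← hu]; rfl
        have hrep2 : ℓ₀.rep.2 = (u : ZMod p) * t := by rw [hℓ₀, ← hu]; rfl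
        have hrepnz : ¬(ℓ₀.rep.1 = 0 ∧ ℓ₀.rep.2 = 0) := prodPair_ne_zero_iff.1 ℓ₀.rep_nonzero
        set k₀ : ZMod p := c * ((u : ZMod p)⁻¹) ^ 3 with hk₀
        have hku : k₀ * (u : ZMod p) ^ 3 = c := by
          have hu0 : (u : ZMod p) ≠ 0 := u.ne_zero
          rw [hk₀]
          field_simp
        have hmem : x = wv k₀ ℓ₀.rep.1 ℓ₀.rep.2 := by
          rw [hrep1, hrep2, wv_scale, hku, ← hx']
        rw [Finset.card_eq_one]
        refine ⟨k₀, ?_⟩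
        ext k
        simp only [Finset.mem_filter, Finset.mem_univ, true_and, Finset.mem_singleton]
        constructor
        · intro hk
          exact wv_inj_k hrepnz (hk.symm.trans hmem)
        · rintro rfl; exact hmem
      · rw [Finset.card_eq_zero, Finset.filter_eq_empty_iff]
        intro k _
        intro hk
        have hk0 : k ≠ 0 := by
          rintro rfl
          rw [wv_zero] at hk
          exact hx0 hk
        have hwv : wv k ℓ.rep.1 ℓ.rep.2 = wv c ((s, t) : ZMod p × ZMod p).1 ((s, t) : ZMod p × ZMod p).2 :=
          hk.symm.trans hx'
        have hmk := mk_eq_of_wv h3 hk0 hc ℓ.rep_nonzero hst0 hwv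
        rw [Projectivization.mk_rep] at hmk
        exact hℓ (hmk.trans rfl)
    simp_rw [hN]
    push_cast
    simp
  · intro hx0 htr
    rw [etaHat_eq h3]
    have hN : ∀ ℓ : Projectivization (ZMod p) (ZMod p × ZMod p),
        (Finset.univ.filter (fun k : ZMod p => x = wv k ℓ.rep.1 ℓ.rep.2)).card = 0 := by
      intro ℓ
      rw [Finset.card_eq_zero, Finset.filter_eq_empty_iff]
      intro k _
      intro hk
      have hk0 : k ≠ 0 := by
        rintro rfl
        rw [wv_zero] at hk
        exact hx0 hk
      refine htr ⟨k, ℓ.rep.1, ℓ.rep.2, ?_, hk0, hk⟩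
      intro h
      have h1 : ℓ.rep.1 = 0 := congrArg Prod.fst h
      have h2 : ℓ.rep.2 = 0 := congrArg Prod.snd h
      exact (prodPair_ne_zero_iff.1 ℓ.rep_nonzero) ⟨h1, h2⟩
    simp [hN]
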